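/- Let Y₁, …, Y_r be smooth time-dependent vector fields on ℝⁿ, let m ≥ 1, and let π : ℝ × (ℝⁿ)^{m+1} → ℝ × (ℝⁿ)^m be the projection forgetting the x₀ block. Assume that at every point (t, x₁, …, x_m) ∈ ℝ × (ℝⁿ)^m the r vectors (1, Y_j(t,x₁), …, Y_j(t,x_m)) ∈ ℝ^{1+nm}, j = 1,…,r, are linearly independent. Then, for smooth functions b₁, …, b_r : ℝ × (ℝⁿ)^{m+1} → ℝ, the vector field ∑_{j=1}^r b_j Ỹ_j equals the time-prolongation Ỹ of some time-dependent vector field Y on ℝⁿ if and only if each b_j is a function of t only and ∑_{j=1}^r b_j ≡ 1. -/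

import Mathlib

/-- The prolongation of a time-dependent vector field `X` on `ℝⁿ` to `ℝ × (ℝⁿ)^{m+1}`:
`X̂(t,x₀,…,x_m) = (0, X(t,x₀), …, X(t,x_m))`. -/
def prolong (n m : ℕ) (X : ℝ × (Fin n → ℝ) → (Fin n → ℝ)) :
    (ℝ × (Fin (m + 1) → Fin n → ℝ)) → ℝ × (Fin (m + 1) → Fin n → ℝ) :=
  fun p => (0, fun a => X (p.1, p.2 a))

/-- The time-prolongation of a time-dependent vector field `X` on `ℝⁿ` to `ℝ × (ℝⁿ)^{m+1}`:
`X̃(t,x₀,…,x_m) = (1, X(t,x₀), …, X(t,x_m))`. -/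
def timeProlong (n m : ℕ) (X : ℝ × (Fin n → ℝ) → (Fin n → ℝ)) :
    (ℝ × (Fin (m + 1) → Fin n → ℝ)) → ℝ × (Fin (m + 1) → Fin n → ℝ) :=
  fun p => (1, fun a => X (p.1, p.2 a))

/-- Let `Y₁, …, Y_r` be smooth time-dependent vector fields on `ℝⁿ` and `m ≥ 1`.  Suppose
that at every point `(t, x₁, …, x_m)` of `ℝ × (ℝⁿ)^m` the projections
`(1, Y_j(t,x₁), …, Y_j(t,x_m))`, `j = 1,…,r`, are linearly independent.  Then, for smooth
functions `b₁, …, b_r` on `ℝ × (ℝⁿ)^{m+1}`, the vector field `∑_j b_j Ỹ_j` is the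
time-prolongation `Ỹ` of some time-dependent vector field `Y` on `ℝⁿ` if and only if each `b_j`
is a function of `t` only and `∑_j b_j ≡ 1`. -/
theorem sum_smul_timeProlong_eq_timeProlong_iff (n r m : ℕ) (hm : 1 ≤ m)
    (Y : Fin r → ℝ × (Fin n → ℝ) → Fin n → ℝ)
    (hY : ∀ j, ContDiff ℝ (⊤ : ℕ∞) (Y j))
    (hind : ∀ (t : ℝ) (x : Fin m → Fin n → ℝ),
      LinearIndependent ℝ (fun j : Fin r =>
        (((1 : ℝ), fun a => Y j (t, x a)) : ℝ × (Fin m → Fin n → ℝ))))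
    (b : Fin r → ℝ × (Fin (m + 1) → Fin n → ℝ) → ℝ)
    (hb : ∀ j, ContDiff ℝ (⊤ : ℕ∞) (b j)) :
    (∃ Y₀ : ℝ × (Fin n → ℝ) → Fin n → ℝ, ContDiff ℝ (⊤ : ℕ∞) Y₀ ∧
        ∀ p, (∑ j, b j p • timeProlong n m (Y j) p) = timeProlong n m Y₀ p)
      ↔
    (∃ β : Fin r → ℝ → ℝ, (∀ j p, b j p = β j p.1) ∧ ∀ t, ∑ j, β j t = 1) := by
  constructor
  · rintro ⟨Y₀, hY₀, heq⟩
    -- sum of coefficients is 1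
    have hsum1 : ∀ p : ℝ × (Fin (m + 1) → Fin n → ℝ), ∑ j, b j p = 1 := by
      intro p
      have h := congrArg Prod.fst (heq p)
      simpa [timeProlong, Prod.fst_sum, smul_eq_mul] using h
    -- key lemma: coefficients don't depend on a single block
    have key : ∀ (t : ℝ) (x x' : Fin (m + 1) → Fin n → ℝ) (k : Fin (m + 1)),
        (∀ i, i ≠ k → x i = x' i) → ∀ j, b j (t, x) = b j (t, x') := by
      intro t x x' k hxx' j
      set y : Fin m → Fin n → ℝ := fun a => x (k.succAbove a) with hy
      have hy' : ∀ a, x' (k.succAbove a) = y a := fun a =>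
        (hxx' _ (Fin.succAbove_ne k a)).symm
      set L : (ℝ × (Fin (m + 1) → Fin n → ℝ)) →ₗ[ℝ] ℝ × (Fin m → Fin n → ℝ) :=
        LinearMap.prodMap LinearMap.id (LinearMap.funLeft ℝ (Fin n → ℝ) k.succAbove) with hL
      have hLval : ∀ (X : ℝ × (Fin n → ℝ) → Fin n → ℝ) (z : Fin (m + 1) → Fin n → ℝ),
          L (timeProlong n m X (t, z))
            = ((1 : ℝ), fun a => X (t, z (k.succAbove a))) := by
        intro X z
        rfl
      have e1 : ∑ i, b i (t, x) • (((1 : ℝ), fun a => Y i (t, y a)) :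
          ℝ × (Fin m → Fin n → ℝ)) = ((1 : ℝ), fun a => Y₀ (t, y a)) := by
        have := congrArg L (heq (t, x))
        rw [map_sum] at this
        simp only [map_smul, hLval] at this
        exact this
      have e2 : ∑ i, b i (t, x') • (((1 : ℝ), fun a => Y i (t, y a)) :
          ℝ × (Fin m → Fin n → ℝ)) = ((1 : ℝ), fun a => Y₀ (t, y a)) := by
        have := congrArg L (heq (t, x'))
        rw [map_sum] at this
        simp only [map_smul, hLval] at this
        simpa only [hy'] using this
      have e3 : ∑ i, (b i (t, x) - b i (t, x')) • (((1 : ℝ), fun a => Y i (t, y a)) :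
          ℝ × (Fin m → Fin n → ℝ)) = 0 := by
        simp only [sub_smul, Finset.sum_sub_distrib, e1, e2, sub_self]
      have := Fintype.linearIndependent_iff.mp (hind t y)
        (fun i => b i (t, x) - b i (t, x')) e3 j
      linarith [this]
    -- coefficients depend only on t
    have hconst : ∀ (t : ℝ) (x : Fin (m + 1) → Fin n → ℝ) (j : Fin r),
        b j (t, x) = b j (t, fun _ => 0) := by
      intro t x j
      have step : ∀ s : Finset (Fin (m + 1)),
          b j (t, fun i => if i ∈ s then 0 else x i) = b j (t, x) := by
        intro s
        induction s using Finset.induction with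
        | empty => simp
        | @insert k s hk ih =>
          have h1 : b j (t, fun i => if i ∈ insert k s then 0 else x i)
              = b j (t, fun i => if i ∈ s then 0 else x i) := by
            apply key t _ _ k
            intro i hik
            simp [Finset.mem_insert, hik]
          rw [h1, ih]
      have := step Finset.univ
      simpa using this.symm
    refine ⟨fun j t => b j (t, fun _ => 0), ?_, ?_⟩
    · intro j p
      have := hconst p.1 p.2 j
      simpa using this
    · intro t
      exact hsum1 (t, fun _ => 0)
  · rintro ⟨β, hβ, hsum⟩
    refine ⟨fun q => ∑ j, b j (q.1, fun _ => q.2) • Y j q, ?_, ?_⟩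
    · apply ContDiff.sum
      intro j _
      refine ContDiff.smul (f := fun x : ℝ × (Fin n → ℝ) => b j (x.1, fun _ => x.2)) ?_ ?_
      · exact (hb j).comp (ContDiff.prodMk contDiff_fst (contDiff_pi.mpr fun _ => contDiff_snd))
      · exact hY j
    · intro p
      apply Prod.ext
      · simp [timeProlong, Prod.fst_sum, smul_eq_mul, hβ, hsum]
      · simp only [timeProlong, Prod.snd_sum, Prod.smul_snd]
        funext a
        simp [Finset.sum_apply, hβ]
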